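/- Work in L²((−1,1), ℂ) with inner product ⟨g, h⟩ = ∫_{−1}^{1} conj(g)·h. Let e_k^p(x) := (1/√2)·exp(iπkx) for k ∈ ℤ (the periodic Hilbert basis), and let e_k^D(x) := sin((kπ/2)(x + 1)) for integers k ≥ 1 (the Dirichlet sine Hilbert basis). Let C ∈ L²((−1,1)) be real-valued and even, and let u ∈ L²((−1,1), ℂ) be odd (u(−x) = −u(x) a.e.). Then, with equality in L²: ∑'_{k∈ℤ} ⟨e_k^p, C⟩·⟨e_k^p, u⟩ • e_k^p = ∑'_{k≥1} ⟨e_k^p, C⟩·⟨e_{2k}^D, u⟩ • e_{2k}^D. -/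

import Mathlib

open MeasureTheory

theorem stmt_16
    (ep : HilbertBasis ℤ ℂ (Lp ℂ 2 (volume.restrict (Set.Ioo (-1 : ℝ) 1))))
    (hep : ∀ k : ℤ, (ep k : ℝ → ℂ) =ᵐ[volume.restrict (Set.Ioo (-1 : ℝ) 1)]
      fun x : ℝ => (Real.sqrt 2 : ℂ)⁻¹ * Complex.exp (Complex.I * Real.pi * (k : ℂ) * (x : ℂ)))
    (eD : HilbertBasis ℕ ℂ (Lp ℂ 2 (volume.restrict (Set.Ioo (-1 : ℝ) 1))))
    (heD : ∀ n : ℕ, (eD n : ℝ → ℂ) =ᵐ[volume.restrict (Set.Ioo (-1 : ℝ) 1)]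
      fun x : ℝ => (Real.sin (((n : ℝ) + 1) * Real.pi / 2 * (x + 1)) : ℂ))
    (C u : Lp ℂ 2 (volume.restrict (Set.Ioo (-1 : ℝ) 1)))
    (hCreal : ∀ᵐ x ∂(volume.restrict (Set.Ioo (-1 : ℝ) 1)), (C x).im = 0)
    (hCeven : ∀ᵐ x ∂(volume.restrict (Set.Ioo (-1 : ℝ) 1)), C (-x) = C x)
    (huodd : ∀ᵐ x ∂(volume.restrict (Set.Ioo (-1 : ℝ) 1)), u (-x) = -u x) :
    (∑' k : ℤ, ((inner ℂ (ep k) C : ℂ) * (inner ℂ (ep k) u : ℂ)) • ep k)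
      = ∑' m : ℕ, ((inner ℂ (ep ((m : ℤ) + 1)) C : ℂ) * (inner ℂ (eD (2 * m + 1)) u : ℂ))
          • eD (2 * m + 1) := by
  classical
  -- the negation map preserves μ
  have negMP : MeasurePreserving (fun x : ℝ => -x) (volume.restrict (Set.Ioo (-1 : ℝ) 1)) (volume.restrict (Set.Ioo (-1 : ℝ) 1)) := by
    have hpre : (fun x : ℝ => -x) ⁻¹' (Set.Ioo (-1 : ℝ) 1) = Set.Ioo (-1 : ℝ) 1 := by
      ext x
      simp only [Set.mem_preimage, Set.mem_Ioo]
      constructor <;> rintro ⟨h1, h2⟩ <;> constructor <;> linarith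
    have := (Measure.measurePreserving_neg (volume : Measure ℝ)).restrict_preimage
      (s := Set.Ioo (-1 : ℝ) 1) measurableSet_Ioo
    rw [hpre] at this
    exact this
  have intneg : ∀ f : ℝ → ℂ, (∫ x, f (-x) ∂(volume.restrict (Set.Ioo (-1 : ℝ) 1))) = ∫ x, f x ∂(volume.restrict (Set.Ioo (-1 : ℝ) 1)) := by
    intro f
    exact negMP.integral_comp (Homeomorph.neg ℝ).measurableEmbedding f
  -- inner products as integrals
  have innerInt : ∀ (f : Lp ℂ 2 (volume.restrict (Set.Ioo (-1 : ℝ) 1))) (k : ℤ),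
      (inner ℂ (ep k) f : ℂ) = ∫ x, (Real.sqrt 2 : ℂ)⁻¹
        * Complex.exp (-(Complex.I * Real.pi * (k : ℂ) * (x : ℂ))) * f x ∂(volume.restrict (Set.Ioo (-1 : ℝ) 1)) := by
    intro f k
    rw [MeasureTheory.L2.inner_def]
    apply integral_congr_ae
    filter_upwards [hep k] with x hx
    rw [RCLike.inner_apply, hx]
    rw [map_mul, ← Complex.exp_conj]
    simp only [map_inv₀, Complex.conj_ofReal, map_mul, Complex.conj_I, map_intCast]
    ring_nf
  -- oddness of the u coefficients
  have hbneg : ∀ k : ℤ, (inner ℂ (ep (-k)) u : ℂ) = -(inner ℂ (ep k) u : ℂ) := by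
    intro k
    have e1 : (inner ℂ (ep (-k)) u : ℂ)
        = ∫ x, (Real.sqrt 2 : ℂ)⁻¹ * Complex.exp (Complex.I * Real.pi * (k : ℂ) * (x : ℂ)) * u x ∂(volume.restrict (Set.Ioo (-1 : ℝ) 1)) := by
      rw [innerInt u (-k)]
      apply integral_congr_ae
      refine Filter.Eventually.of_forall fun x => ?_
      push_cast
      ring_nf
    have e3 := intneg (fun x : ℝ =>
      (Real.sqrt 2 : ℂ)⁻¹ * Complex.exp (Complex.I * Real.pi * (k : ℂ) * (x : ℂ)) * u x)
    have e4 : (∫ x, (Real.sqrt 2 : ℂ)⁻¹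
          * Complex.exp (Complex.I * Real.pi * (k : ℂ) * ((-x : ℝ) : ℂ)) * u (-x) ∂(volume.restrict (Set.Ioo (-1 : ℝ) 1)))
        = ∫ x, -((Real.sqrt 2 : ℂ)⁻¹
          * Complex.exp (-(Complex.I * Real.pi * (k : ℂ) * (x : ℂ))) * u x) ∂(volume.restrict (Set.Ioo (-1 : ℝ) 1)) := by
      apply integral_congr_ae
      filter_upwards [huodd] with x hx
      rw [hx]
      push_cast
      ring_nf
    rw [e1, ← e3, e4, integral_neg, innerInt u k]
  have hb0 : (inner ℂ (ep 0) u : ℂ) = 0 := by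
    have := hbneg 0
    rw [neg_zero] at this
    linear_combination (this : _) / 2
  -- evenness of the C coefficients
  have hcneg : ∀ k : ℤ, (inner ℂ (ep (-k)) C : ℂ) = (inner ℂ (ep k) C : ℂ) := by
    intro k
    have e1 : (inner ℂ (ep (-k)) C : ℂ)
        = ∫ x, (Real.sqrt 2 : ℂ)⁻¹ * Complex.exp (Complex.I * Real.pi * (k : ℂ) * (x : ℂ)) * C x ∂(volume.restrict (Set.Ioo (-1 : ℝ) 1)) := by
      rw [innerInt C (-k)]
      apply integral_congr_ae
      refine Filter.Eventually.of_forall fun x => ?_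
      push_cast
      ring_nf
    have e3 := intneg (fun x : ℝ =>
      (Real.sqrt 2 : ℂ)⁻¹ * Complex.exp (Complex.I * Real.pi * (k : ℂ) * (x : ℂ)) * C x)
    have e4 : (∫ x, (Real.sqrt 2 : ℂ)⁻¹
          * Complex.exp (Complex.I * Real.pi * (k : ℂ) * ((-x : ℝ) : ℂ)) * C (-x) ∂(volume.restrict (Set.Ioo (-1 : ℝ) 1)))
        = ∫ x, (Real.sqrt 2 : ℂ)⁻¹
          * Complex.exp (-(Complex.I * Real.pi * (k : ℂ) * (x : ℂ))) * C x ∂(volume.restrict (Set.Ioo (-1 : ℝ) 1)) := by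
      apply integral_congr_ae
      filter_upwards [hCeven] with x hx
      rw [hx]
      push_cast
      ring_nf
    rw [e1, ← e3, e4, innerInt C k]
  -- pointwise identity relating the Dirichlet sines to exponentials
  have key : ∀ (m : ℕ) (x : ℝ),
      ((Real.sin ((((2*m+1 : ℕ) : ℝ) + 1) * Real.pi / 2 * (x+1)) : ℝ) : ℂ)
        = (((-1:ℂ)^(m+1) * (-Complex.I)) / (Real.sqrt 2 : ℂ))
          * ((Real.sqrt 2 : ℂ)⁻¹ * Complex.exp (Complex.I * Real.pi * ((((m:ℤ)+1 : ℤ)) : ℂ) * x)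
            - (Real.sqrt 2 : ℂ)⁻¹ * Complex.exp (Complex.I * Real.pi * (((-((m:ℤ)+1) : ℤ)) : ℂ) * x)) := by
    intro m x
    have h2 : (Real.sqrt 2 : ℂ) * (Real.sqrt 2 : ℂ) = 2 := by
      norm_cast
      exact Real.mul_self_sqrt (by norm_num)
    have hs2ne : (Real.sqrt 2 : ℂ) ≠ 0 := by
      intro h; rw [h, mul_zero] at h2; norm_num at h2
    have harg : (((2*m+1 : ℕ) : ℝ) + 1) * Real.pi / 2 * (x+1)
        = ((m:ℝ)+1) * Real.pi * x + ((m:ℝ)+1) * Real.pi := by push_cast; ring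
    rw [harg, Complex.ofReal_sin]
    push_cast
    set w : ℂ := (m:ℂ) + 1 with hw
    have hE : Complex.exp ((w * Real.pi) * Complex.I) = (-1:ℂ)^(m+1) := by
      have e : (w * Real.pi) * Complex.I = ((m+1 : ℕ) : ℂ) * ((Real.pi : ℂ) * Complex.I) := by
        rw [hw]; push_cast; ring
      rw [e, Complex.exp_nat_mul, Complex.exp_pi_mul_I]
    have hEneg : Complex.exp (-((w * Real.pi) * Complex.I)) = (-1:ℂ)^(m+1) := by
      rw [Complex.exp_neg, hE, ← inv_pow, inv_neg, inv_one]
    have h2s := Complex.two_sin (w * Real.pi * x + w * Real.pi)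
    have ea : (-(w * Real.pi * x + w * Real.pi)) * Complex.I
        = (-(w * Real.pi * x)) * Complex.I + (-((w * Real.pi) * Complex.I)) := by ring
    have eb : (w * Real.pi * x + w * Real.pi) * Complex.I
        = (w * Real.pi * x) * Complex.I + ((w * Real.pi) * Complex.I) := by ring
    rw [ea, eb, Complex.exp_add, Complex.exp_add, hE, hEneg] at h2s
    have e1 : Complex.I * Real.pi * w * x = (w * Real.pi * x) * Complex.I := by ring
    have e2 : Complex.I * Real.pi * (-w) * x = (-(w * Real.pi * x)) * Complex.I := by ring
    rw [e1, e2]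
    have ht : (Real.sqrt 2 : ℂ)⁻¹ * (Real.sqrt 2 : ℂ)⁻¹ = 1/2 := by
      rw [← mul_inv, h2]
      norm_num
    linear_combination h2s / 2 + (((-1:ℂ)^(m+1)) * Complex.I
      * (Complex.exp ((w * Real.pi * x) * Complex.I) - Complex.exp ((-(w * Real.pi * x)) * Complex.I))) * ht
  -- eD (2m+1) as a combination of ep (m+1) and ep (-(m+1))
  have eDrel : ∀ m : ℕ, (eD (2*m+1) : Lp ℂ 2 (volume.restrict (Set.Ioo (-1 : ℝ) 1)))
      = (((-1:ℂ)^(m+1) * (-Complex.I)) / (Real.sqrt 2 : ℂ)) • (ep ((m:ℤ)+1) - ep (-((m:ℤ)+1))) := by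
    intro m
    refine Lp.ext ?_
    have hsmul := Lp.coeFn_smul ((((-1:ℂ)^(m+1) * (-Complex.I)) / (Real.sqrt 2 : ℂ)))
      (ep ((m:ℤ)+1) - ep (-((m:ℤ)+1)))
    have hsub := Lp.coeFn_sub (ep ((m:ℤ)+1)) (ep (-((m:ℤ)+1)))
    filter_upwards [heD (2*m+1), hep ((m:ℤ)+1), hep (-((m:ℤ)+1)), hsmul, hsub]
      with x hx1 hxp hxn hxs hxsub
    rw [hx1, hxs, Pi.smul_apply, hxsub, Pi.sub_apply, hxp, hxn, smul_eq_mul]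
    exact_mod_cast key m x
  have hinner_eD : ∀ m : ℕ, (inner ℂ (eD (2*m+1)) u : ℂ)
      = (starRingEnd ℂ) (((-1:ℂ)^(m+1) * (-Complex.I)) / (Real.sqrt 2 : ℂ))
        * ((inner ℂ (ep ((m:ℤ)+1)) u : ℂ) - (inner ℂ (ep (-((m:ℤ)+1))) u : ℂ)) := by
    intro m
    rw [eDrel m, inner_smul_left, inner_sub_left]
  -- the summand family over ℤ
  set G : ℤ → Lp ℂ 2 (volume.restrict (Set.Ioo (-1 : ℝ) 1)) :=
    fun k => ((inner ℂ (ep k) C : ℂ) * (inner ℂ (ep k) u : ℂ)) • ep k with hGdef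
  have hsummable : Summable G := by
    have h1 : Summable (fun k : ℤ => ‖(inner ℂ C (ep k) : ℂ) * (inner ℂ (ep k) u : ℂ)‖) :=
      summable_norm_iff.mpr (ep.summable_inner_mul_inner C u)
    refine Summable.of_norm (h1.congr fun k => ?_)
    rw [hGdef]
    simp only []
    rw [norm_smul, ep.orthonormal.1 k, mul_one, norm_mul, norm_mul, norm_inner_symm]
  have hG0 : G 0 = 0 := by
    rw [hGdef]
    simp only []
    rw [hb0, mul_zero, zero_smul]
  -- coefficient identity
  have h2 : (Real.sqrt 2 : ℂ) * (Real.sqrt 2 : ℂ) = 2 := by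
    norm_cast
    exact Real.mul_self_sqrt (by norm_num)
  have hco : ∀ m : ℕ, (starRingEnd ℂ) (((-1:ℂ)^(m+1) * (-Complex.I)) / (Real.sqrt 2 : ℂ))
      * (((-1:ℂ)^(m+1) * (-Complex.I)) / (Real.sqrt 2 : ℂ)) = 1/2 := by
    intro m
    have hs2ne : (Real.sqrt 2 : ℂ) ≠ 0 := by
      intro h; rw [h, mul_zero] at h2; norm_num at h2
    have hm : ((-1:ℂ))^(m+1) * ((-1:ℂ))^(m+1) = 1 := by rw [← mul_pow]; norm_num
    simp only [map_div₀, map_mul, map_pow, map_neg, Complex.conj_I, map_one, Complex.conj_ofReal]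
    rw [div_mul_div_comm, h2]
    linear_combination (-(Complex.I^2)/2) * hm + (-(1:ℂ)/2) * Complex.I_sq
  have key2 : ∀ m : ℕ,
      ((inner ℂ (ep ((m:ℤ)+1)) C : ℂ) * (inner ℂ (eD (2*m+1)) u : ℂ)) • eD (2*m+1)
        = G ((m:ℤ)+1) + G (-((m:ℤ)+1)) := by
    intro m
    have hb := hbneg ((m:ℤ)+1)
    have hc := hcneg ((m:ℤ)+1)
    have hGp : G ((m:ℤ)+1)
        = ((inner ℂ (ep ((m:ℤ)+1)) C : ℂ) * (inner ℂ (ep ((m:ℤ)+1)) u : ℂ)) • ep ((m:ℤ)+1) := rfl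
    have hGn : G (-((m:ℤ)+1))
        = ((inner ℂ (ep (-((m:ℤ)+1))) C : ℂ) * (inner ℂ (ep (-((m:ℤ)+1))) u : ℂ))
            • ep (-((m:ℤ)+1)) := rfl
    rw [hinner_eD m, eDrel m, hGp, hGn, hb, hc, smul_smul]
    have hcoef : (inner ℂ (ep ((m:ℤ)+1)) C : ℂ)
        * ((starRingEnd ℂ) (((-1:ℂ)^(m+1) * (-Complex.I)) / (Real.sqrt 2 : ℂ))
           * ((inner ℂ (ep ((m:ℤ)+1)) u : ℂ) - -(inner ℂ (ep ((m:ℤ)+1)) u : ℂ)))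
        * (((-1:ℂ)^(m+1) * (-Complex.I)) / (Real.sqrt 2 : ℂ))
        = (inner ℂ (ep ((m:ℤ)+1)) C : ℂ) * (inner ℂ (ep ((m:ℤ)+1)) u : ℂ) := by
      linear_combination (2 * (inner ℂ (ep ((m:ℤ)+1)) C : ℂ)
        * (inner ℂ (ep ((m:ℤ)+1)) u : ℂ)) * hco m
    rw [hcoef, smul_sub, mul_neg, neg_smul, ← sub_eq_add_neg]
  have hs1 : Summable (fun n : ℕ => G (n:ℤ)) :=
    hsummable.comp_injective fun a b h => by exact_mod_cast h
  have hs2 : Summable (fun n : ℕ => G (-((n:ℤ)+1))) :=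
    hsummable.comp_injective fun a b h => by omega
  have hs3 : Summable (fun n : ℕ => G ((n:ℤ)+1)) :=
    hsummable.comp_injective fun a b h => by omega
  calc (∑' k : ℤ, G k) = (∑' n : ℕ, G (n:ℤ)) + ∑' n : ℕ, G (-((n:ℤ)+1)) :=
        tsum_of_nat_of_neg_add_one hs1 hs2
    _ = (∑' n : ℕ, G ((n:ℤ)+1)) + ∑' n : ℕ, G (-((n:ℤ)+1)) := by
        rw [Summable.tsum_eq_zero_add hs1, Nat.cast_zero, hG0, zero_add]
        norm_cast
    _ = ∑' n : ℕ, (G ((n:ℤ)+1) + G (-((n:ℤ)+1))) := (Summable.tsum_add hs3 hs2).symm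
    _ = _ := tsum_congr fun m => (key2 m).symm
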